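/- Let 0 ≤ q < 1, let α, β > 0 and γ, δ ≥ 0, and let N ∈ ℕ satisfy α·β = q^N·γ·δ. Set L = N+1 and, for 1 ≤ j ≤ L, let p_j = α/(α + γ·q^{j−1}). Then the product Bernoulli function P(τ₁,…,τ_L) = ∏_{j=1}^{L} p_j^{τ_j}·(1−p_j)^{1−τ_j} satisfies the ASEP stationarity equations with parameters (α,β,γ,δ,q). -/
import Mathlib


noncomputable section

open scoped BigOperators

lemma prod_upd {L : ℕ} (g : Fin L → Bool → ℝ) (τ : Fin L → Bool)
    (s : Finset (Fin L)) (i : Fin L) (hi : i ∈ s) (v : Bool) :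
    ∏ j ∈ s, g j (Function.update τ i v j)
      = g i v * ∏ j ∈ s.erase i, g j (τ j) := by
  rw [← Finset.mul_prod_erase s (fun j => g j (Function.update τ i v j)) hi,
    Function.update_self]
  congr 1
  refine Finset.prod_congr rfl fun j hj => ?_
  rw [Function.update_of_ne (Finset.ne_of_mem_erase hj)]

/-- numeric indicator of a Boolean site value: `1` if occupied, `0` if empty. -/
def indic (b : Bool) : ℝ := if b then 1 else 0

/-- `P : {0,1}^L → ℝ` satisfies the ASEP stationarity equations with
parameters `(α,β,γ,δ,q)`. -/
def ASEPStationary (q α β γ δ : ℝ) (L : ℕ) (hL : 0 < L) (P : (Fin L → Bool) → ℝ) : Prop :=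
  ∀ τ : Fin L → Bool,
    (indic (τ ⟨0, hL⟩) - indic (!τ ⟨0, hL⟩)) *
        (α * P (Function.update τ ⟨0, hL⟩ false) - γ * P (Function.update τ ⟨0, hL⟩ true))
      + (∑ k : Fin (L - 1),
          (indic (τ ⟨(k : ℕ) + 1, Nat.add_lt_of_lt_sub k.isLt⟩)
              - indic (τ ⟨(k : ℕ), Nat.lt_of_succ_lt (Nat.add_lt_of_lt_sub k.isLt)⟩)) *
            (P (Function.update (Function.update τ
                  ⟨(k : ℕ), Nat.lt_of_succ_lt (Nat.add_lt_of_lt_sub k.isLt)⟩ true)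
                  ⟨(k : ℕ) + 1, Nat.add_lt_of_lt_sub k.isLt⟩ false)
              - q * P (Function.update (Function.update τ
                  ⟨(k : ℕ), Nat.lt_of_succ_lt (Nat.add_lt_of_lt_sub k.isLt)⟩ false)
                  ⟨(k : ℕ) + 1, Nat.add_lt_of_lt_sub k.isLt⟩ true)))
      + (indic (!τ ⟨L - 1, Nat.sub_lt hL Nat.one_pos⟩)
            - indic (τ ⟨L - 1, Nat.sub_lt hL Nat.one_pos⟩)) *
          (β * P (Function.update τ ⟨L - 1, Nat.sub_lt hL Nat.one_pos⟩ true)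
            - δ * P (Function.update τ ⟨L - 1, Nat.sub_lt hL Nat.one_pos⟩ false)) = 0

theorem stmt2 (q α β γ δ : ℝ) (N : ℕ) (hq0 : 0 ≤ q) (hq1 : q < 1)
    (hα : 0 < α) (hβ : 0 < β) (hγ : 0 ≤ γ) (hδ : 0 ≤ δ)
    (hsing : α * β = q ^ N * γ * δ) :
    ASEPStationary q α β γ δ (N + 1) (Nat.succ_pos N)
      (fun τ : Fin (N + 1) → Bool =>
        ∏ j : Fin (N + 1),
          (if τ j then α / (α + γ * q ^ (j : ℕ))
            else 1 - α / (α + γ * q ^ (j : ℕ)))) := by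
  intro τ
  have hd : ∀ n : ℕ, α + γ * q ^ n ≠ 0 := fun n => by positivity
  have key : ∀ (σ : Fin (N+1) → Bool) (i : Fin (N+1)) (v : Bool),
      (∏ j : Fin (N+1), (if Function.update σ i v j then α / (α + γ * q ^ (j : ℕ))
          else 1 - α / (α + γ * q ^ (j : ℕ))))
        = (if v then α / (α + γ * q ^ (i : ℕ)) else 1 - α / (α + γ * q ^ (i : ℕ)))
          * ∏ j ∈ Finset.univ.erase i, (if σ j then α / (α + γ * q ^ (j : ℕ))
              else 1 - α / (α + γ * q ^ (j : ℕ))) :=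
    fun σ i v => prod_upd (fun j b => if b then α / (α + γ * q ^ (j : ℕ))
      else 1 - α / (α + γ * q ^ (j : ℕ))) σ Finset.univ i (Finset.mem_univ i) v
  simp only [key, if_true, Bool.false_eq_true, if_false]
  have split : ∀ x y z : ℝ, x = 0 → y = 0 → z = 0 → x + y + z = 0 := by
    intros x y z hx hy hz; rw [hx, hy, hz]; ring
  apply split
  · -- left boundary
    have fac : α * (1 - α / (α + γ * q ^ 0)) - γ * (α / (α + γ * q ^ 0)) = 0 := by
      field_simp
      ring
    have gen : ∀ c R x y u v : ℝ, x * u - y * v = 0 →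
        c * (x * (u * R) - y * (v * R)) = 0 := by
      intro c R x y u v h
      have : x * (u * R) - y * (v * R) = (x * u - y * v) * R := by ring
      rw [this, h, zero_mul, mul_zero]
    exact gen _ _ _ _ _ _ fac
  · -- bulk
    refine Finset.sum_eq_zero fun x _ => ?_
    have hne : ((⟨(x : ℕ), Nat.lt_of_succ_lt (Nat.add_lt_of_lt_sub x.isLt)⟩ : Fin (N+1)))
        ∈ (Finset.univ.erase (⟨(x : ℕ) + 1, Nat.add_lt_of_lt_sub x.isLt⟩ : Fin (N+1))) :=
      Finset.mem_erase.mpr ⟨Fin.ne_of_val_ne (by simp), Finset.mem_univ _⟩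
    rw [prod_upd (fun j b => if b then α / (α + γ * q ^ (j : ℕ))
        else 1 - α / (α + γ * q ^ (j : ℕ))) τ _ _ hne true,
      prod_upd (fun j b => if b then α / (α + γ * q ^ (j : ℕ))
        else 1 - α / (α + γ * q ^ (j : ℕ))) τ _ _ hne false]
    simp only [if_true, Bool.false_eq_true, if_false]
    have fac : (1 - α / (α + γ * q ^ ((x : ℕ) + 1))) * (α / (α + γ * q ^ (x : ℕ)))
        - q * ((α / (α + γ * q ^ ((x : ℕ) + 1))) * (1 - α / (α + γ * q ^ (x : ℕ)))) = 0 := by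
      field_simp
      ring
    have gen : ∀ c R g1 e1 e2 g2 : ℝ, g1 * e1 - q * (e2 * g2) = 0 →
        c * (g1 * (e1 * R) - q * (e2 * (g2 * R))) = 0 := by
      intro c R g1 e1 e2 g2 h
      have : g1 * (e1 * R) - q * (e2 * (g2 * R)) = (g1 * e1 - q * (e2 * g2)) * R := by ring
      rw [this, h, zero_mul, mul_zero]
    exact gen _ _ _ _ _ _ fac
  · -- right boundary
    have hN : N + 1 - 1 = N := rfl
    have fac : β * (α / (α + γ * q ^ (N + 1 - 1)))
        - δ * (1 - α / (α + γ * q ^ (N + 1 - 1))) = 0 := by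
      rw [hN]
      field_simp
      linear_combination hsing
    have gen : ∀ c R x y u v : ℝ, x * u - y * v = 0 →
        c * (x * (u * R) - y * (v * R)) = 0 := by
      intro c R x y u v h
      have : x * (u * R) - y * (v * R) = (x * u - y * v) * R := by ring
      rw [this, h, zero_mul, mul_zero]
    exact gen _ _ _ _ _ _ fac

end
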